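/- The function h(t̃) = ln(2^{(Z/B)·e^{−t̃}} − 1) is convex in t̃ ∈ ℝ, for any constants Z, B > 0. -/

import Mathlib

open Real

private lemma epos (a t : ℝ) (ha : 0 < a) : 0 < Real.exp (a * Real.exp (-t)) - 1 := by
  have h : 0 < a * Real.exp (-t) := mul_pos ha (Real.exp_pos _)
  have := Real.one_lt_exp_iff.2 h
  linarith

private lemma hu (a t : ℝ) :
    HasDerivAt (fun s : ℝ => a * Real.exp (-s)) (-(a * Real.exp (-t))) t := by
  have h1 : HasDerivAt (fun s : ℝ => -s) (-1) t := (hasDerivAt_id t).neg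
  have h2 : HasDerivAt (fun s : ℝ => Real.exp (-s)) (Real.exp (-t) * -1) t :=
    (Real.hasDerivAt_exp (-t)).comp t h1
  have := h2.const_mul a
  convert this using 1
  rfl
  rfl
  ring

private lemma hg (a t : ℝ) :
    HasDerivAt (fun s : ℝ => Real.exp (a * Real.exp (-s)) - 1)
      (Real.exp (a * Real.exp (-t)) * -(a * Real.exp (-t))) t := by
  have := ((Real.hasDerivAt_exp (a * Real.exp (-t))).comp t (hu a t)).sub_const 1
  convert this using 1
  all_goals rfl

private noncomputable def phi (a : ℝ) : ℝ → ℝ := fun t =>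
  Real.exp (a * Real.exp (-t)) * -(a * Real.exp (-t)) / (Real.exp (a * Real.exp (-t)) - 1)

private lemma hF (a t : ℝ) (ha : 0 < a) :
    HasDerivAt (fun s : ℝ => Real.log (Real.exp (a * Real.exp (-s)) - 1)) (phi a t) t :=
  (hg a t).log (ne_of_gt (epos a t ha))

private lemma hphi (a t : ℝ) (ha : 0 < a) :
    HasDerivAt (phi a)
      (a * Real.exp (-t) * Real.exp (a * Real.exp (-t)) *
        (Real.exp (a * Real.exp (-t)) - 1 - a * Real.exp (-t)) /
        (Real.exp (a * Real.exp (-t)) - 1) ^ 2) t := by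
  set u := a * Real.exp (-t) with hudef
  -- numerator N s = exp(u s) * -(u s); derivative
  have hN : HasDerivAt (fun s : ℝ => Real.exp (a * Real.exp (-s)) * -(a * Real.exp (-s)))
      (Real.exp u * -u * -u + Real.exp u * u) t := by
    have h1 : HasDerivAt (fun s : ℝ => Real.exp (a * Real.exp (-s))) (Real.exp u * -u) t := by
      have := (Real.hasDerivAt_exp u).comp t (hu a t)
      exact this
    have h2 : HasDerivAt (fun s : ℝ => -(a * Real.exp (-s))) u t := by
      have := (hu a t).neg
      rw [neg_neg] at this
      exact this
    have := h1.mul h2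
    convert this using 1
    all_goals rfl
  have hD := hg a t
  have := hN.div hD (ne_of_gt (epos a t ha))
  convert this using 1
  rfl
  rfl
  rfl
  have hne : Real.exp u - 1 ≠ 0 := ne_of_gt (epos a t ha)
  rw [← hudef]
  field_simp
  ring

private lemma aux (a : ℝ) (ha : 0 < a) :
    ConvexOn ℝ Set.univ (fun t : ℝ => Real.log (Real.exp (a * Real.exp (-t)) - 1)) := by
  have hderiv : deriv (fun t : ℝ => Real.log (Real.exp (a * Real.exp (-t)) - 1)) = phi a := by
    funext t; exact (hF a t ha).deriv
  apply convexOn_of_deriv2_nonneg' convex_univ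
  · intro t _
    exact (hF a t ha).differentiableAt.differentiableWithinAt
  · intro t _
    rw [hderiv]
    exact (hphi a t ha).differentiableAt.differentiableWithinAt
  · intro t _
    have : deriv^[2] (fun t : ℝ => Real.log (Real.exp (a * Real.exp (-t)) - 1)) t
        = a * Real.exp (-t) * Real.exp (a * Real.exp (-t)) *
          (Real.exp (a * Real.exp (-t)) - 1 - a * Real.exp (-t)) /
          (Real.exp (a * Real.exp (-t)) - 1) ^ 2 := by
      rw [Function.iterate_succ, Function.iterate_one, Function.comp_apply, hderiv]
      exact (hphi a t ha).deriv
    rw [this]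
    apply div_nonneg _ (sq_nonneg _)
    have h1 : 0 < a * Real.exp (-t) := mul_pos ha (Real.exp_pos _)
    have h2 : a * Real.exp (-t) + 1 ≤ Real.exp (a * Real.exp (-t)) := Real.add_one_le_exp _
    have h3 : 0 ≤ Real.exp (a * Real.exp (-t)) - 1 - a * Real.exp (-t) := by linarith
    positivity

theorem log_transformed_rate_term_convex (Z B : ℝ) (hZ : 0 < Z) (hB : 0 < B) :
    ConvexOn ℝ Set.univ
      (fun tt : ℝ => Real.log ((2 : ℝ) ^ (Z / B * Real.exp (-tt)) - 1)) := by
  have ha : 0 < Real.log 2 * (Z / B) :=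
    mul_pos (Real.log_pos one_lt_two) (div_pos hZ hB)
  have := aux (Real.log 2 * (Z / B)) ha
  convert this using 2 with tt
  rw [Real.rpow_def_of_pos (by norm_num : (0:ℝ) < 2)]
  ring_nf
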